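/- Let ι be an index type, w : ι → ℝ a nonnegative summable family, B > 0, ε a real with 0 < ε < π/2, and g : ι → ℂ with |g i| ≤ B for all i. Let F = {i | arg(g i) ∉ (−ε, ε)}. Then Σ_i |g i|² · (w i) ≤ B² · (1 + 1/cos ε) · Σ_{i ∈ F} (w i) + (B/cos ε) · Re(Σ_i (g i) · (w i)). -/

import Mathlib

open Set

/-- Pointwise sector density principle: for a bounded complex family `g` with
nonnegative summable weights `w`, the second moment is controlled by the weight
of the set where `arg (g i)` leaves `(-ε, ε)` plus the real part of the first
moment. -/
theorem stmt_3 {ι : Type*} (w : ι → ℝ) (g : ι → ℂ)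
    (hw : ∀ i, 0 ≤ w i) (hsum : Summable w)
    (B : ℝ) (hB : 0 < B) (ε : ℝ) (hε0 : 0 < ε) (hε : ε < Real.pi / 2)
    (hg : ∀ i, ‖g i‖ ≤ B) :
    ∑' i, ‖g i‖ ^ 2 * w i ≤
      B ^ 2 * (1 + 1 / Real.cos ε) *
        (∑' i : {i | Complex.arg (g i) ∉ Ioo (-ε) ε}, w i) +
      (B / Real.cos ε) * (∑' i, g i * (w i : ℂ)).re := by
  set c := Real.cos ε with hc_def
  have hc : 0 < c := Real.cos_pos_of_mem_Ioo ⟨by linarith [Real.pi_pos], hε⟩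
  set F : Set ι := {i | Complex.arg (g i) ∉ Ioo (-ε) ε} with hF
  -- summabilities
  have h1 : Summable (fun i => ‖g i‖ ^ 2 * w i) := by
    apply Summable.of_nonneg_of_le
      (fun i => mul_nonneg (by positivity) (hw i))
      (fun i => ?_) (hsum.mul_left (B ^ 2))
    have h := hg i
    have h0 := norm_nonneg (g i)
    have : ‖g i‖ ^ 2 ≤ B ^ 2 := by nlinarith
    exact mul_le_mul_of_nonneg_right this (hw i)
  have h2 : Summable (F.indicator w) := hsum.indicator F
  have h3 : Summable (fun i => (g i).re * w i) := by
    apply Summable.of_norm_bounded (hsum.mul_left B)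
    intro i
    have h := Complex.abs_re_le_norm (g i)
    simp only [norm_mul, Real.norm_eq_abs, abs_of_nonneg (hw i)]
    have : |(g i).re| ≤ B := le_trans h (hg i)
    exact mul_le_mul_of_nonneg_right this (hw i)
  have hC : Summable (fun i => g i * (w i : ℂ)) := by
    apply Summable.of_norm_bounded (hsum.mul_left B)
    intro i
    simp only [norm_mul, Complex.norm_real, Real.norm_eq_abs, abs_of_nonneg (hw i)]
    exact mul_le_mul_of_nonneg_right (hg i) (hw i)
  -- rewrite the real part of the complex sum
  have hre : (∑' i, g i * (w i : ℂ)).re = ∑' i, (g i).re * w i := by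
    rw [Complex.re_tsum hC]
    congr 1
    ext i
    simp [Complex.mul_re]
  -- pointwise bound
  have key : ∀ i, ‖g i‖ ^ 2 * w i ≤
      B ^ 2 * (1 + 1 / c) * F.indicator w i + (B / c) * ((g i).re * w i) := by
    intro i
    have habs := hg i
    have habs0 := norm_nonneg (g i)
    have hrele := Complex.abs_re_le_norm (g i)
    by_cases hi : i ∈ F
    · rw [Set.indicator_of_mem hi]
      have h1' : -B ≤ (g i).re := by
        have := neg_abs_le (g i).re
        linarith
      have hBc : 0 < B / c := div_pos hB hc
      -- |g|^2 ≤ B^2, and (B/c)*re ≥ -(B/c)*B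
      have hre' : -(B / c) * B * w i ≤ (B / c) * ((g i).re * w i) := by
        have h' : -B * w i ≤ (g i).re * w i :=
          mul_le_mul_of_nonneg_right h1' (hw i)
        have := mul_le_mul_of_nonneg_left h' hBc.le
        linarith
      have hsq : ‖g i‖ ^ 2 * w i ≤ B ^ 2 * w i := by
        have : ‖g i‖ ^ 2 ≤ B ^ 2 := by nlinarith
        exact mul_le_mul_of_nonneg_right this (hw i)
      have hcle : c ≤ 1 := Real.cos_le_one ε
      have : B ^ 2 * (1 + 1 / c) * w i = B ^ 2 * w i + (B ^ 2 / c) * w i := by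
        field_simp
      rw [this]
      have heq : -(B / c) * B * w i = -(B ^ 2 / c) * w i := by ring
      linarith [hre', hsq]
    · rw [Set.indicator_of_notMem hi]
      simp only [hF, Set.mem_setOf_eq, not_not] at hi
      rcases eq_or_ne (g i) 0 with h0 | h0
      · simp [h0]
      · have harg := Complex.cos_arg h0
        have hargmem : Complex.arg (g i) ∈ Ioo (-ε) ε := hi
        have hcos : c ≤ Real.cos (Complex.arg (g i)) := by
          rw [← Real.cos_abs (Complex.arg (g i))]
          apply Real.cos_le_cos_of_nonneg_of_le_pi (abs_nonneg _)
            (by linarith [Real.pi_pos])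
          rw [abs_le]
          constructor <;> [linarith [hargmem.1]; linarith [hargmem.2]]
        have habsp : 0 < ‖g i‖ := by
          simpa [norm_pos_iff] using h0
        have hre' : ‖g i‖ * c ≤ (g i).re := by
          have h' : c ≤ (g i).re / ‖g i‖ := harg ▸ hcos
          have := (le_div_iff₀ habsp).mp h'
          linarith
        have : ‖g i‖ ^ 2 ≤ (B / c) * (g i).re := by
          have h1' : ‖g i‖ ^ 2 ≤ B * ‖g i‖ := by
            nlinarith [habs, habs0]
          have h2' : B * ‖g i‖ ≤ (B / c) * (g i).re := by
            rw [div_mul_eq_mul_div, le_div_iff₀ hc]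
            have := mul_le_mul_of_nonneg_left hre' hB.le
            linarith
          linarith
        calc ‖g i‖ ^ 2 * w i ≤ ((B / c) * (g i).re) * w i :=
              mul_le_mul_of_nonneg_right this (hw i)
          _ = B ^ 2 * (1 + 1 / c) * 0 + (B / c) * ((g i).re * w i) := by ring
  -- combine
  have hRHS : Summable (fun i => B ^ 2 * (1 + 1 / c) * F.indicator w i
      + (B / c) * ((g i).re * w i)) :=
    (h2.mul_left _).add (h3.mul_left _)
  calc ∑' i, ‖g i‖ ^ 2 * w i
      ≤ ∑' i, (B ^ 2 * (1 + 1 / c) * F.indicator w i + (B / c) * ((g i).re * w i)) :=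
        Summable.tsum_le_tsum key h1 hRHS
    _ = B ^ 2 * (1 + 1 / c) * (∑' i, F.indicator w i)
        + (B / c) * ∑' i, (g i).re * w i := by
        rw [Summable.tsum_add (h2.mul_left _) (h3.mul_left _), tsum_mul_left, tsum_mul_left]
    _ = B ^ 2 * (1 + 1 / c) * (∑' i : F, w i)
        + (B / c) * (∑' i, g i * (w i : ℂ)).re := by
        rw [hre, tsum_subtype]
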